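/- arXiv:2206.13228 — 2 statements merged into one kernel-verified Lean document; each statement's English description precedes it below -/
import Mathlib

section
/- Let |ψ'⟩ = Σ_{z ∈ S} |ψ'_z⟩ ⊗ |z⟩ be a unit vector in H ⊗ (C²)^{⊗n} with support (in the second register, computational basis) contained in S ⊆ F₂^n. Let p(x) = (1/2^n)‖Σ_z (−1)^{x·z} |ψ'_z⟩‖² be the distribution obtained by measuring the second register in the Hadamard basis. Then the collision probability satisfies Σ_x p(x)² ≤ |S|/2^n. -/
open Finset

lemma neg_one_pow_mod_two (k : ℕ) : ((-1 : ℂ)) ^ (k % 2) = (-1 : ℂ) ^ k := by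
  conv_rhs => rw [← Nat.div_add_mod k 2]
  rw [pow_add, pow_mul]
  norm_num

lemma neg_one_zmod_add (a b : ZMod 2) :
    ((-1 : ℂ)) ^ (a + b).val = (-1 : ℂ) ^ a.val * (-1 : ℂ) ^ b.val := by
  rw [ZMod.val_add, neg_one_pow_mod_two, pow_add]

lemma neg_one_succ (s : ZMod 2) :
    ((-1 : ℂ)) ^ (s + 1).val = -((-1 : ℂ) ^ s.val) := by
  rw [neg_one_zmod_add]
  norm_num [ZMod.val_one]

/-- character sum orthogonality -/
lemma char_sum {n : ℕ} (v : Fin n → ZMod 2) :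
    ∑ x : Fin n → ZMod 2, ((-1 : ℂ)) ^ (∑ i, x i * v i : ZMod 2).val
      = if v = 0 then (2 ^ n : ℂ) else 0 := by
  by_cases hv : v = 0
  · simp [hv, Finset.card_univ]
  · simp only [hv, if_false]
    obtain ⟨j, hj⟩ : ∃ j, v j ≠ 0 := by
      by_contra h
      push_neg at h
      exact hv (funext fun i => h i)
    have hvj : v j = 1 := by
      have : ∀ a : ZMod 2, a ≠ 0 → a = 1 := by decide
      exact this _ hj
    have split : ∀ y : Fin n → ZMod 2,
        (∑ i, y i * v i) = (∑ i ∈ univ \ {j}, y i * v i) + y j * v j :=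
      fun y => Finset.sum_eq_sum_sdiff_singleton_add (Finset.mem_univ j) _
    refine Finset.sum_ninvolution (fun x => Function.update x j (x j + 1)) ?_ ?_
      (fun _ => Finset.mem_univ _) ?_
    · intro x
      have hsum : (∑ i, (Function.update x j (x j + 1)) i * v i)
          = (∑ i, x i * v i) + 1 := by
        rw [split (Function.update x j (x j + 1)), split x]
        have h1 : ∑ i ∈ univ \ {j}, (Function.update x j (x j + 1)) i * v i
            = ∑ i ∈ univ \ {j}, x i * v i := by
          refine Finset.sum_congr rfl fun i hi => ?_
          rw [Function.update_of_ne (by simpa using (Finset.mem_sdiff.mp hi).2)]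
        rw [h1, Function.update_self, hvj]
        ring
      rw [hsum, neg_one_succ]
      ring
    · intro x _ h
      have h2 : ∀ a : ZMod 2, a + 1 ≠ a := by decide
      exact h2 (x j) (by simpa using congrFun h j)
    · intro x
      funext i
      by_cases hij : i = j
      · subst hij
        simp only [Function.update_self]
        have : ∀ a : ZMod 2, a + 1 + 1 = a := by decide
        exact this _
      · simp [Function.update_of_ne hij]

lemma parseval {n : ℕ} {E : Type*} [NormedAddCommGroup E] [InnerProductSpace ℂ E]
    (ψ : (Fin n → ZMod 2) → E) :
    ∑ x : Fin n → ZMod 2,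
        ‖∑ z : Fin n → ZMod 2, ((-1 : ℂ) ^ (∑ i, x i * z i : ZMod 2).val) • ψ z‖ ^ 2
      = 2 ^ n * ∑ z : Fin n → ZMod 2, ‖ψ z‖ ^ 2 := by
  set u : (Fin n → ZMod 2) → E := fun x =>
    ∑ z : Fin n → ZMod 2, ((-1 : ℂ) ^ (∑ i, x i * z i : ZMod 2).val) • ψ z with hu
  have hinner : ∑ x : Fin n → ZMod 2, (inner ℂ (u x) (u x) : ℂ)
      = (((2 ^ n : ℝ) * ∑ z : Fin n → ZMod 2, ‖ψ z‖ ^ 2 : ℝ) : ℂ) := by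
    have key : ∀ x : Fin n → ZMod 2, (inner ℂ (u x) (u x) : ℂ)
        = ∑ z : Fin n → ZMod 2, ∑ w : Fin n → ZMod 2,
            ((-1 : ℂ) ^ (∑ i, x i * z i : ZMod 2).val) * ((-1 : ℂ) ^ (∑ i, x i * w i : ZMod 2).val)
              * (inner ℂ (ψ z) (ψ w) : ℂ) := by
      intro x
      rw [hu]
      rw [sum_inner]
      refine Finset.sum_congr rfl fun z _ => ?_
      rw [inner_sum]
      refine Finset.sum_congr rfl fun w _ => ?_
      rw [inner_smul_left, inner_smul_right]
      have : (starRingEnd ℂ) ((-1 : ℂ) ^ (∑ i, x i * z i : ZMod 2).val)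
          = (-1 : ℂ) ^ (∑ i, x i * z i : ZMod 2).val := by
        rw [map_pow, map_neg, map_one]
      rw [this]; ring
    calc ∑ x : Fin n → ZMod 2, (inner ℂ (u x) (u x) : ℂ)
        = ∑ x : Fin n → ZMod 2, ∑ z : Fin n → ZMod 2, ∑ w : Fin n → ZMod 2,
            ((-1 : ℂ) ^ (∑ i, x i * z i : ZMod 2).val) * ((-1 : ℂ) ^ (∑ i, x i * w i : ZMod 2).val)
              * (inner ℂ (ψ z) (ψ w) : ℂ) := Finset.sum_congr rfl fun x _ => key x
      _ = ∑ z : Fin n → ZMod 2, ∑ w : Fin n → ZMod 2,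
            (∑ x : Fin n → ZMod 2, ((-1 : ℂ) ^ (∑ i, x i * z i : ZMod 2).val)
              * ((-1 : ℂ) ^ (∑ i, x i * w i : ZMod 2).val)) * (inner ℂ (ψ z) (ψ w) : ℂ) := by
          rw [Finset.sum_comm]
          refine Finset.sum_congr rfl fun z _ => ?_
          rw [Finset.sum_comm]
          refine Finset.sum_congr rfl fun w _ => ?_
          rw [Finset.sum_mul]
      _ = ∑ z : Fin n → ZMod 2, (2 ^ n : ℂ) * (inner ℂ (ψ z) (ψ z) : ℂ) := by
          refine Finset.sum_congr rfl fun z _ => ?_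
          have horth : ∀ w : Fin n → ZMod 2,
              (∑ x : Fin n → ZMod 2, ((-1 : ℂ) ^ (∑ i, x i * z i : ZMod 2).val)
                * ((-1 : ℂ) ^ (∑ i, x i * w i : ZMod 2).val))
              = if z + w = 0 then (2 ^ n : ℂ) else 0 := by
            intro w
            rw [← char_sum (z + w)]
            refine Finset.sum_congr rfl fun x _ => ?_
            rw [show (∑ i, x i * (z + w) i) = (∑ i, x i * z i) + (∑ i, x i * w i) by
              rw [← Finset.sum_add_distrib]
              exact Finset.sum_congr rfl fun i _ => by simp [Pi.add_apply]; ring]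
            rw [neg_one_zmod_add]
          have hdec : ∀ a b : ZMod 2, a + b = 0 → b = a := by decide
          rw [Finset.sum_eq_single z]
          · have hz : z + z = 0 := funext fun i => by
              have : ∀ a : ZMod 2, a + a = 0 := by decide
              exact this (z i)
            rw [horth z, if_pos hz]
          · intro w _ hw
            rw [horth w]
            have hzw : z + w ≠ 0 := fun h =>
              hw (funext fun i => hdec _ _ (congrFun h i))
            rw [if_neg hzw, zero_mul]
          · intro h; exact absurd (Finset.mem_univ z) h
      _ = (((2 ^ n : ℝ) * ∑ z : Fin n → ZMod 2, ‖ψ z‖ ^ 2 : ℝ) : ℂ) := by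
          push_cast
          rw [Finset.mul_sum]
          refine Finset.sum_congr rfl fun z _ => ?_
          rw [inner_self_eq_norm_sq_to_K]
          norm_num
  have hre : ∀ x, ‖u x‖ ^ 2 = (inner ℂ (u x) (u x) : ℂ).re := by
    intro x
    rw [@norm_sq_eq_re_inner ℂ]
    simp
  calc ∑ x : Fin n → ZMod 2, ‖u x‖ ^ 2
      = (∑ x : Fin n → ZMod 2, (inner ℂ (u x) (u x) : ℂ)).re := by
        rw [Complex.re_sum]
        exact Finset.sum_congr rfl fun x _ => hre x
    _ = 2 ^ n * ∑ z : Fin n → ZMod 2, ‖ψ z‖ ^ 2 := by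
        rw [hinner, Complex.ofReal_re]

/-- collision-probability bound for the Hadamard-basis measurement distribution
of a state supported (in the computational basis) on `S`. -/
theorem stmt7 {n : ℕ} {E : Type*} [NormedAddCommGroup E] [InnerProductSpace ℂ E]
    (S : Finset (Fin n → ZMod 2)) (ψ : (Fin n → ZMod 2) → E)
    (hsupp : ∀ z ∉ S, ψ z = 0)
    (hunit : ∑ z : Fin n → ZMod 2, ‖ψ z‖ ^ 2 = 1) :
    ∑ x : Fin n → ZMod 2,
        ((1 / 2 ^ n : ℝ) *
          ‖∑ z : Fin n → ZMod 2,
              ((-1 : ℂ) ^ (∑ i, x i * z i : ZMod 2).val) • ψ z‖ ^ 2) ^ 2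
      ≤ (S.card : ℝ) / 2 ^ n := by
  set p : (Fin n → ZMod 2) → ℝ := fun x =>
    (1 / 2 ^ n : ℝ) *
      ‖∑ z : Fin n → ZMod 2, ((-1 : ℂ) ^ (∑ i, x i * z i : ZMod 2).val) • ψ z‖ ^ 2 with hp
  have hpos : (0 : ℝ) < 2 ^ n := by positivity
  have hp_nonneg : ∀ x, 0 ≤ p x := fun x => by positivity
  have hp_sum : ∑ x : Fin n → ZMod 2, p x = 1 := by
    rw [hp, ← Finset.mul_sum, parseval ψ, hunit]
    field_simp
  have hp_le : ∀ x, p x ≤ (S.card : ℝ) / 2 ^ n := by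
    intro x
    have hnorm : ‖∑ z : Fin n → ZMod 2, ((-1 : ℂ) ^ (∑ i, x i * z i : ZMod 2).val) • ψ z‖
        ≤ ∑ z ∈ S, ‖ψ z‖ := by
      have hres : ∑ z : Fin n → ZMod 2, ((-1 : ℂ) ^ (∑ i, x i * z i : ZMod 2).val) • ψ z
          = ∑ z ∈ S, ((-1 : ℂ) ^ (∑ i, x i * z i : ZMod 2).val) • ψ z := by
        refine (Finset.sum_subset (Finset.subset_univ S) fun z _ hz => ?_).symm
        rw [hsupp z hz, smul_zero]
      rw [hres]
      refine (norm_sum_le _ _).trans ?_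
      refine Finset.sum_le_sum fun z _ => ?_
      rw [norm_smul]
      have : ‖(-1 : ℂ) ^ (∑ i, x i * z i : ZMod 2).val‖ = 1 := by
        rw [norm_pow, norm_neg, norm_one, one_pow]
      rw [this, one_mul]
    have hcs : (∑ z ∈ S, ‖ψ z‖) ^ 2 ≤ (S.card : ℝ) * ∑ z ∈ S, ‖ψ z‖ ^ 2 :=
      sq_sum_le_card_mul_sum_sq
    have hsub : ∑ z ∈ S, ‖ψ z‖ ^ 2 ≤ 1 := by
      rw [← hunit]
      exact Finset.sum_le_sum_of_subset_of_nonneg (Finset.subset_univ S)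
        fun z _ _ => by positivity
    have hnsq : ‖∑ z : Fin n → ZMod 2, ((-1 : ℂ) ^ (∑ i, x i * z i : ZMod 2).val) • ψ z‖ ^ 2
        ≤ (S.card : ℝ) := by
      calc _ ≤ (∑ z ∈ S, ‖ψ z‖) ^ 2 := by
              apply pow_le_pow_left₀ (norm_nonneg _) hnorm
        _ ≤ (S.card : ℝ) * ∑ z ∈ S, ‖ψ z‖ ^ 2 := hcs
        _ ≤ (S.card : ℝ) * 1 := by
              exact mul_le_mul_of_nonneg_left hsub (Nat.cast_nonneg _)
        _ = (S.card : ℝ) := mul_one _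
    calc p x = (1 / 2 ^ n : ℝ) *
          ‖∑ z : Fin n → ZMod 2, ((-1 : ℂ) ^ (∑ i, x i * z i : ZMod 2).val) • ψ z‖ ^ 2 := rfl
      _ ≤ (1 / 2 ^ n : ℝ) * (S.card : ℝ) :=
          mul_le_mul_of_nonneg_left hnsq (by positivity)
      _ = (S.card : ℝ) / 2 ^ n := by ring
  calc ∑ x : Fin n → ZMod 2, p x ^ 2
      ≤ ∑ x : Fin n → ZMod 2, ((S.card : ℝ) / 2 ^ n) * p x := by
        refine Finset.sum_le_sum fun x _ => ?_
        rw [sq]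
        exact mul_le_mul_of_nonneg_right (hp_le x) (hp_nonneg x)
    _ = (S.card : ℝ) / 2 ^ n := by rw [← Finset.mul_sum, hp_sum, mul_one]
end

section
/- Uncertainty relation for standard and Hadamard basis measurements: Let ρ be a density operator on (C²)^{⊗n}, and let D_z, D_x be the probability distributions obtained by measuring ρ in the computational and Hadamard bases respectively. Then for all subsets S, T ⊆ F₂^n, D_x(T) ≤ 2√(1 − D_z(S)) + √(|S|·|T|/2^n). -/
set_option maxHeartbeats 1000000


open ComplexOrder

/-- The `n`-qubit Hadamard transform `H^{⊗n}`, as a matrix indexed by bit strings. -/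
noncomputable def hadamardN (n : ℕ) :
    Matrix (Fin n → ZMod 2) (Fin n → ZMod 2) ℂ :=
  fun x z => ((1 / Real.sqrt (2 ^ n) : ℝ) : ℂ) * (-1 : ℂ) ^ (∑ i, x i * z i : ZMod 2).val

/-! ### Auxiliary lemmas -/

lemma zmod2_cases (a : ZMod 2) : a = 0 ∨ a = 1 := by revert a; decide

lemma char_add (a b : ZMod 2) : ((-1:ℂ))^(a+b).val = (-1)^a.val * (-1)^b.val := by
  rcases zmod2_cases a with rfl | rfl <;> rcases zmod2_cases b with rfl | rfl <;>
    simp only [show ((1:ZMod 2)+1) = 0 from by decide, add_zero, zero_add,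
      show ((0:ZMod 2)).val = 0 from rfl, show ((1:ZMod 2)).val = 1 from rfl] <;> norm_num

lemma sumchar {n : ℕ} (w : Fin n → ZMod 2) :
    ∑ x : Fin n → ZMod 2, ((-1:ℂ))^((∑ i, x i * w i : ZMod 2)).val
      = if w = 0 then ((2:ℂ)^n) else 0 := by
  by_cases hw : w = 0
  · subst hw
    simp only [Pi.zero_apply, mul_zero, Finset.sum_const_zero,
      show ((0:ZMod 2)).val = 0 from rfl, pow_zero, Finset.sum_const, nsmul_eq_mul, mul_one,
      if_pos rfl]
    norm_num [Fintype.card_pi]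
  · rw [if_neg hw]
    obtain ⟨i₀, hi₀⟩ : ∃ i, w i ≠ 0 := by
      by_contra h; push_neg at h; exact hw (funext fun i => h i)
    have hwi : w i₀ = 1 := (zmod2_cases (w i₀)).resolve_left hi₀
    have he : True := trivial
    set e : Fin n → ZMod 2 := Pi.single i₀ 1 with hedef
    set f : (Fin n → ZMod 2) → ℂ := fun x => ((-1:ℂ))^((∑ i, x i * w i : ZMod 2)).val with hf
    have key : ∀ x, f (e + x) = - f x := by
      intro x
      have hsum : (∑ i, (e + x) i * w i)
          = 1 + ∑ i, x i * w i := by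
        have : ∀ i, (e + x) i * w i
            = e i * w i + x i * w i := by
          intro i; simp [add_mul]
        rw [Finset.sum_congr rfl fun i _ => this i, Finset.sum_add_distrib]
        congr 1
        rw [Finset.sum_eq_single i₀]
        · simp [hedef, hwi]
        · intro b _ hb; simp [hedef, Pi.single_eq_of_ne hb]
        · simp [hedef]
      simp only [hf, hsum, char_add]
      simp [show ((1:ZMod 2)).val = 1 from rfl]
    have hshift : ∑ x, f (e + x) = ∑ x, f x :=
      Equiv.sum_comp (Equiv.addLeft e) f
    rw [Finset.sum_congr rfl fun x _ => key x, Finset.sum_neg_distrib] at hshift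
    linear_combination (- hshift) / 2

lemma hconj {n : ℕ} (x y : Fin n → ZMod 2) :
    (starRingEnd ℂ) (hadamardN n x y) = hadamardN n x y := by
  simp [hadamardN, map_mul, map_pow, Complex.conj_ofReal]

lemma hsymm {n : ℕ} (x z : Fin n → ZMod 2) :
    hadamardN n z x = hadamardN n x z := by
  unfold hadamardN
  rw [show (∑ i, z i * x i : ZMod 2) = ∑ i, x i * z i from
    Finset.sum_congr rfl fun i _ => mul_comm _ _]

lemma habs {n : ℕ} (x y : Fin n → ZMod 2) :
    ‖hadamardN n x y‖ = 1 / Real.sqrt (2 ^ n) := by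
  unfold hadamardN
  rw [norm_mul, norm_pow, norm_neg, norm_one, one_pow, mul_one, Complex.norm_real, Real.norm_eq_abs]
  rw [abs_of_nonneg (by positivity)]

lemma horth {n : ℕ} (y z : Fin n → ZMod 2) :
    ∑ x : Fin n → ZMod 2, hadamardN n x y * hadamardN n x z
      = if y = z then 1 else 0 := by
  have hsq : ((1 / Real.sqrt (2 ^ n) : ℝ) : ℂ) * ((1 / Real.sqrt (2 ^ n) : ℝ) : ℂ)
      = 1 / (2:ℂ)^n := by
    rw [← Complex.ofReal_mul]
    rw [show (1 / Real.sqrt (2 ^ n)) * (1 / Real.sqrt (2 ^ n))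
        = 1 / (Real.sqrt (2^n) * Real.sqrt (2^n)) by ring,
      Real.mul_self_sqrt (by positivity)]
    push_cast; ring
  have hterm : ∀ x, hadamardN n x y * hadamardN n x z
      = (1 / (2:ℂ)^n) * (-1:ℂ)^((∑ i, x i * (y i + z i) : ZMod 2)).val := by
    intro x
    have hexp : (∑ i, x i * (y i + z i) : ZMod 2)
        = (∑ i, x i * y i) + (∑ i, x i * z i) := by
      rw [← Finset.sum_add_distrib]
      exact Finset.sum_congr rfl fun i _ => mul_add _ _ _
    rw [hexp, char_add]
    unfold hadamardN
    rw [← hsq]; ring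
  rw [Finset.sum_congr rfl fun x _ => hterm x, ← Finset.mul_sum, sumchar]
  by_cases h : y = z
  · subst h
    rw [if_pos, if_pos rfl]
    · field_simp
    · funext i; exact CharTwo.add_self_eq_zero _
  · rw [if_neg, if_neg h, mul_zero]
    intro hc
    apply h
    funext i
    have h0 : y i + z i = 0 := congrFun hc i
    have hz : z i + z i = 0 := CharTwo.add_self_eq_zero _
    calc y i = y i + z i + z i := by rw [add_assoc, hz, add_zero]
      _ = z i := by rw [h0, zero_add]

lemma parsevalC {n : ℕ} (v : (Fin n → ZMod 2) → ℂ) :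
    ∑ x : Fin n → ZMod 2,
        (starRingEnd ℂ) (∑ y, hadamardN n x y * v y) * (∑ y, hadamardN n x y * v y)
      = ∑ y, (starRingEnd ℂ) (v y) * v y := by
  calc ∑ x : Fin n → ZMod 2,
        (starRingEnd ℂ) (∑ y, hadamardN n x y * v y) * (∑ y, hadamardN n x y * v y)
      = ∑ x : Fin n → ZMod 2, ∑ y, ∑ z,
          ((starRingEnd ℂ) (v y) * v z) * (hadamardN n x y * hadamardN n x z) := by
        refine Finset.sum_congr rfl fun x _ => ?_
        rw [map_sum, Finset.sum_mul_sum]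
        refine Finset.sum_congr rfl fun y _ => Finset.sum_congr rfl fun z _ => ?_
        rw [map_mul, hconj]; ring
    _ = ∑ y, ∑ z, ((starRingEnd ℂ) (v y) * v z)
          * ∑ x : Fin n → ZMod 2, (hadamardN n x y * hadamardN n x z) := by
        rw [Finset.sum_comm]
        refine Finset.sum_congr rfl fun y _ => ?_
        rw [Finset.sum_comm]
        exact Finset.sum_congr rfl fun z _ => (Finset.mul_sum _ _ _).symm
    _ = ∑ y, (starRingEnd ℂ) (v y) * v y := by
        refine Finset.sum_congr rfl fun y _ => ?_
        simp [horth, mul_ite, mul_one, mul_zero]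

lemma conj_mul_self_re (z : ℂ) : ((starRingEnd ℂ) z * z).re = Complex.normSq z := by
  rw [mul_comm, Complex.mul_conj, Complex.ofReal_re]

lemma conj_mul_self_eq (z : ℂ) :
    (starRingEnd ℂ) z * z = (Complex.normSq z : ℂ) := by
  rw [mul_comm, Complex.mul_conj]

lemma parseval_s9 {n : ℕ} (v : (Fin n → ZMod 2) → ℂ) :
    ∑ x : Fin n → ZMod 2, Complex.normSq (∑ y, hadamardN n x y * v y)
      = ∑ y, Complex.normSq (v y) := by
  have main := parsevalC v
  rw [Finset.sum_congr rfl fun x _ => conj_mul_self_eq _,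
    Finset.sum_congr rfl fun y _ => conj_mul_self_eq _] at main
  exact_mod_cast main

lemma sum_T_le_parseval {n : ℕ} (T : Finset (Fin n → ZMod 2))
    (v : (Fin n → ZMod 2) → ℂ) :
    ∑ x ∈ T, Complex.normSq (∑ y, hadamardN n x y * v y)
      ≤ ∑ y, Complex.normSq (v y) := by
  rw [← parseval_s9 v]
  exact Finset.sum_le_sum_of_subset_of_nonneg (Finset.subset_univ T)
    (fun _ _ _ => Complex.normSq_nonneg _)

/-- The analytic core, phrased for an explicit "purification" matrix `C`. -/
lemma main_aux {n : ℕ} (S T : Finset (Fin n → ZMod 2))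
    (C : (Fin n → ZMod 2) → (Fin n → ZMod 2) → ℂ)
    (htr : ∑ k, ∑ y, Complex.normSq (C k y) = 1) :
    ∑ k, ∑ x ∈ T, Complex.normSq (∑ y, hadamardN n x y * C k y)
      ≤ 2 * Real.sqrt (1 - ∑ k, ∑ y ∈ S, Complex.normSq (C k y))
        + Real.sqrt ((S.card : ℝ) * T.card / 2 ^ n) := by
  classical
  set Dz : ℝ := ∑ k, ∑ y ∈ S, Complex.normSq (C k y) with hDzdef
  set q : ℝ := (S.card : ℝ) * T.card / 2 ^ n with hqdef
  -- split the amplitude vectors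
  set u : (Fin n → ZMod 2) → (Fin n → ZMod 2) → ℂ := fun k y => if y ∈ S then C k y else 0 with hudef
  set w : (Fin n → ZMod 2) → (Fin n → ZMod 2) → ℂ := fun k y => if y ∈ S then 0 else C k y with hwdef
  set A : (Fin n → ZMod 2) → (Fin n → ZMod 2) → ℂ := fun k x => ∑ y, hadamardN n x y * u k y with hAdef
  set B : (Fin n → ZMod 2) → (Fin n → ZMod 2) → ℂ := fun k x => ∑ y, hadamardN n x y * w k y with hBdef
  set g : (Fin n → ZMod 2) → (Fin n → ZMod 2) → ℂ := fun k x => ∑ y, hadamardN n x y * C k y with hgdef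
  have hgAB : ∀ k x, g k x = A k x + B k x := by
    intro k x
    rw [hAdef, hBdef, hgdef]
    simp only
    rw [← Finset.sum_add_distrib]
    refine Finset.sum_congr rfl fun y _ => ?_
    by_cases hy : y ∈ S <;> simp [hudef, hwdef, hy]
  -- Parseval identities
  have hu_sum : ∀ k, ∑ y, Complex.normSq (u k y) = ∑ y ∈ S, Complex.normSq (C k y) := by
    intro k
    rw [show (∑ y, Complex.normSq (u k y))
        = ∑ y, if y ∈ S then Complex.normSq (C k y) else 0 from
      Finset.sum_congr rfl fun y _ => by by_cases hy : y ∈ S <;> simp [hudef, hy]]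
    rw [Finset.sum_ite_mem, Finset.univ_inter]
  have hw_sum : ∀ k, ∑ y, Complex.normSq (w k y)
      = (∑ y, Complex.normSq (C k y)) - ∑ y ∈ S, Complex.normSq (C k y) := by
    intro k
    have : ∀ y, Complex.normSq (w k y) = Complex.normSq (C k y) - Complex.normSq (u k y) := by
      intro y; by_cases hy : y ∈ S <;> simp [hudef, hwdef, hy]
    rw [Finset.sum_congr rfl fun y _ => this y, Finset.sum_sub_distrib, hu_sum]
  set α : ℝ := ∑ k, ∑ x ∈ T, Complex.normSq (A k x) with hαdef
  set β : ℝ := ∑ k, ∑ x ∈ T, Complex.normSq (B k x) with hβdef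
  set γ : ℝ := ∑ k, ∑ x ∈ T, Complex.normSq (g k x) with hγdef
  have hα0 : 0 ≤ α := Finset.sum_nonneg fun k _ =>
    Finset.sum_nonneg fun x _ => Complex.normSq_nonneg _
  have hβ0 : 0 ≤ β := Finset.sum_nonneg fun k _ =>
    Finset.sum_nonneg fun x _ => Complex.normSq_nonneg _
  have hγ0 : 0 ≤ γ := Finset.sum_nonneg fun k _ =>
    Finset.sum_nonneg fun x _ => Complex.normSq_nonneg _
  have hDz0 : 0 ≤ Dz := Finset.sum_nonneg fun k _ =>
    Finset.sum_nonneg fun y _ => Complex.normSq_nonneg _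
  have hDz1 : Dz ≤ 1 := by
    rw [hDzdef, ← htr]
    refine Finset.sum_le_sum fun k _ => ?_
    exact Finset.sum_le_sum_of_subset_of_nonneg (Finset.subset_univ S)
      (fun _ _ _ => Complex.normSq_nonneg _)
  have hγ1 : γ ≤ 1 := by
    rw [hγdef, ← htr]
    exact Finset.sum_le_sum fun k _ => sum_T_le_parseval T (C k)
  have hβb : β ≤ 1 - Dz := by
    rw [hβdef]
    have : ∀ k, (k ∈ (Finset.univ : Finset (Fin n → ZMod 2))) → ∑ x ∈ T, Complex.normSq (B k x)
        ≤ (∑ y, Complex.normSq (C k y)) - ∑ y ∈ S, Complex.normSq (C k y) := by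
      intro k _
      rw [← hw_sum k]
      exact sum_T_le_parseval T (w k)
    calc ∑ k, ∑ x ∈ T, Complex.normSq (B k x)
        ≤ ∑ k, ((∑ y, Complex.normSq (C k y)) - ∑ y ∈ S, Complex.normSq (C k y)) :=
          Finset.sum_le_sum this
      _ = 1 - Dz := by rw [Finset.sum_sub_distrib, htr, hDzdef]
  have hαDz : α ≤ Dz := by
    rw [hαdef, hDzdef]
    refine Finset.sum_le_sum fun k _ => ?_
    rw [← hu_sum k]
    exact sum_T_le_parseval T (u k)
  -- the Frobenius-type bound on α
  have hAptwise : ∀ k x, Complex.normSq (A k x)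
      ≤ ((S.card : ℝ) / 2 ^ n) * ∑ y ∈ S, Complex.normSq (C k y) := by
    intro k x
    have hAS : A k x = ∑ y ∈ S, hadamardN n x y * C k y := by
      rw [hAdef]
      simp only
      rw [show (∑ y, hadamardN n x y * u k y)
          = ∑ y, if y ∈ S then hadamardN n x y * C k y else 0 from
        Finset.sum_congr rfl fun y _ => by by_cases hy : y ∈ S <;> simp [hudef, hy]]
      rw [Finset.sum_ite_mem, Finset.univ_inter]
    have habsA : ‖A k x‖ ≤ (1 / Real.sqrt (2^n)) * ∑ y ∈ S, ‖C k y‖ := by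
      rw [hAS]
      refine le_trans (norm_sum_le _ _) ?_
      rw [Finset.mul_sum]
      refine Finset.sum_le_sum fun y _ => ?_
      rw [norm_mul, habs]
    have hsq : Complex.normSq (A k x) ≤ (1 / Real.sqrt (2^n))^2
        * (∑ y ∈ S, ‖C k y‖)^2 := by
      rw [← Complex.sq_norm, ← mul_pow]
      exact pow_le_pow_left₀ (norm_nonneg _) habsA 2
    have hCS : (∑ y ∈ S, ‖C k y‖)^2
        ≤ (S.card : ℝ) * ∑ y ∈ S, Complex.normSq (C k y) := by
      refine le_trans (sq_sum_le_card_mul_sum_sq) ?_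
      refine mul_le_mul_of_nonneg_left ?_ (Nat.cast_nonneg _)
      exact le_of_eq (Finset.sum_congr rfl fun y _ => Complex.sq_norm _)
    have hc2 : (1 / Real.sqrt (2^n))^2 = 1 / 2^n := by
      rw [div_pow, one_pow, Real.sq_sqrt (by positivity : (0:ℝ) ≤ 2^n)]
    calc Complex.normSq (A k x)
        ≤ (1 / Real.sqrt (2^n))^2 * (∑ y ∈ S, ‖C k y‖)^2 := hsq
      _ ≤ (1 / 2^n) * ((S.card : ℝ) * ∑ y ∈ S, Complex.normSq (C k y)) := by
          rw [hc2]
          exact mul_le_mul_of_nonneg_left hCS (by positivity)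
      _ = ((S.card : ℝ) / 2 ^ n) * ∑ y ∈ S, Complex.normSq (C k y) := by ring
  have hαq : α ≤ q := by
    have : α ≤ q * Dz := by
      rw [hαdef, hDzdef, hqdef, Finset.mul_sum]
      refine Finset.sum_le_sum fun k _ => ?_
      calc ∑ x ∈ T, Complex.normSq (A k x)
          ≤ ∑ _x ∈ T, ((S.card : ℝ) / 2 ^ n) * ∑ y ∈ S, Complex.normSq (C k y) :=
            Finset.sum_le_sum fun x _ => hAptwise k x
        _ = (T.card : ℝ) * (((S.card : ℝ) / 2 ^ n) * ∑ y ∈ S, Complex.normSq (C k y)) := by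
            rw [Finset.sum_const, nsmul_eq_mul]
        _ = (S.card : ℝ) * T.card / 2 ^ n * ∑ y ∈ S, Complex.normSq (C k y) := by ring
    have hq0 : 0 ≤ q := by rw [hqdef]; positivity
    calc α ≤ q * Dz := this
      _ ≤ q * 1 := mul_le_mul_of_nonneg_left hDz1 hq0
      _ = q := mul_one q
  -- cross-term bound
  have hptwise : ∀ k x, Complex.normSq (g k x)
      ≤ Complex.normSq (A k x)
        + ‖A k x‖ * ‖B k x‖
        + ‖B k x‖ * ‖g k x‖ := by
    intro k x
    have hid : (starRingEnd ℂ) (g k x) * g k x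
        = (starRingEnd ℂ) (A k x) * A k x
          + ((starRingEnd ℂ) (A k x) * B k x + (starRingEnd ℂ) (B k x) * g k x) := by
      rw [hgAB k x, map_add]; ring
    have hre : Complex.normSq (g k x)
        = Complex.normSq (A k x)
          + (((starRingEnd ℂ) (A k x) * B k x).re + ((starRingEnd ℂ) (B k x) * g k x).re) := by
      rw [← conj_mul_self_re, ← conj_mul_self_re, hid]
      simp [Complex.add_re]
    rw [hre]
    have h1 : ((starRingEnd ℂ) (A k x) * B k x).re
        ≤ ‖A k x‖ * ‖B k x‖ := by
      refine le_trans (Complex.re_le_norm _) ?_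
      rw [norm_mul, Complex.norm_conj]
    have h2 : ((starRingEnd ℂ) (B k x) * g k x).re
        ≤ ‖B k x‖ * ‖g k x‖ := by
      refine le_trans (Complex.re_le_norm _) ?_
      rw [norm_mul, Complex.norm_conj]
    linarith
  -- Cauchy–Schwarz over the product index set
  have hCS2 : ∀ (F G : (Fin n → ZMod 2) → (Fin n → ZMod 2) → ℂ),
      ∑ k, ∑ x ∈ T, ‖F k x‖ * ‖G k x‖
        ≤ Real.sqrt (∑ k, ∑ x ∈ T, Complex.normSq (F k x))
          * Real.sqrt (∑ k, ∑ x ∈ T, Complex.normSq (G k x)) := by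
    intro F G
    have h1 : ∑ k, ∑ x ∈ T, ‖F k x‖ * ‖G k x‖
        = ∑ p ∈ Finset.univ ×ˢ T, ‖F p.1 p.2‖ * ‖G p.1 p.2‖ :=
      (Finset.sum_product _ _ (fun p => ‖F p.1 p.2‖ * ‖G p.1 p.2‖)).symm
    have h2 : ∑ k, ∑ x ∈ T, Complex.normSq (F k x)
        = ∑ p ∈ Finset.univ ×ˢ T, (‖F p.1 p.2‖)^2 := by
      rw [Finset.sum_product _ _ (fun p => (‖F p.1 p.2‖)^2)]
      exact Finset.sum_congr rfl fun k _ => Finset.sum_congr rfl fun x _ =>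
        (Complex.sq_norm _).symm
    have h3 : ∑ k, ∑ x ∈ T, Complex.normSq (G k x)
        = ∑ p ∈ Finset.univ ×ˢ T, (‖G p.1 p.2‖)^2 := by
      rw [Finset.sum_product _ _ (fun p => (‖G p.1 p.2‖)^2)]
      exact Finset.sum_congr rfl fun k _ => Finset.sum_congr rfl fun x _ =>
        (Complex.sq_norm _).symm
    rw [h1, h2, h3]
    exact Real.sum_mul_le_sqrt_mul_sqrt _ _ _
  have hcross : γ ≤ α + Real.sqrt α * Real.sqrt β + Real.sqrt β * Real.sqrt γ := by
    have step : γ ≤ α + (∑ k, ∑ x ∈ T, ‖A k x‖ * ‖B k x‖)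
        + (∑ k, ∑ x ∈ T, ‖B k x‖ * ‖g k x‖) := by
      rw [hγdef, hαdef]
      calc ∑ k, ∑ x ∈ T, Complex.normSq (g k x)
          ≤ ∑ k, ∑ x ∈ T, (Complex.normSq (A k x)
              + ‖A k x‖ * ‖B k x‖
              + ‖B k x‖ * ‖g k x‖) :=
            Finset.sum_le_sum fun k _ => Finset.sum_le_sum fun x _ => hptwise k x
        _ = _ := by
            simp only [Finset.sum_add_distrib]
    refine le_trans step ?_
    have c1 := hCS2 A B
    have c2 := hCS2 B g
    rw [← hαdef, ← hβdef] at c1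
    rw [← hβdef, ← hγdef] at c2
    linarith
  -- arithmetic endgame
  have sα : Real.sqrt α ≤ 1 := Real.sqrt_le_one.mpr (hαDz.trans hDz1)
  have sγ : Real.sqrt γ ≤ 1 := Real.sqrt_le_one.mpr hγ1
  have sβ : Real.sqrt β ≤ Real.sqrt (1 - Dz) := Real.sqrt_le_sqrt hβb
  have sβ0 : 0 ≤ Real.sqrt β := Real.sqrt_nonneg _
  have sα0 : 0 ≤ Real.sqrt α := Real.sqrt_nonneg _
  have hterm1 : Real.sqrt α * Real.sqrt β ≤ Real.sqrt (1 - Dz) := by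
    calc Real.sqrt α * Real.sqrt β ≤ 1 * Real.sqrt (1 - Dz) :=
          mul_le_mul sα sβ sβ0 zero_le_one
      _ = Real.sqrt (1 - Dz) := one_mul _
  have hterm2 : Real.sqrt β * Real.sqrt γ ≤ Real.sqrt (1 - Dz) := by
    calc Real.sqrt β * Real.sqrt γ ≤ Real.sqrt (1 - Dz) * 1 := by
          refine mul_le_mul sβ sγ (Real.sqrt_nonneg _) (Real.sqrt_nonneg _)
      _ = Real.sqrt (1 - Dz) := mul_one _
  have hαsq : α ≤ Real.sqrt q := by
    have hq0 : 0 ≤ q := by rw [hqdef]; positivity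
    by_cases hq1 : q ≤ 1
    · have h1 : Real.sqrt q * Real.sqrt q = q := Real.mul_self_sqrt hq0
      have h2 : Real.sqrt q ≤ 1 := Real.sqrt_le_one.mpr hq1
      calc α ≤ q := hαq
        _ = Real.sqrt q * Real.sqrt q := h1.symm
        _ ≤ Real.sqrt q * 1 := mul_le_mul_of_nonneg_left h2 (Real.sqrt_nonneg _)
        _ = Real.sqrt q := mul_one _
    · have : (1:ℝ) ≤ Real.sqrt q := Real.one_le_sqrt.mpr (le_of_not_ge hq1)
      calc α ≤ Dz := hαDz
        _ ≤ 1 := hDz1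
        _ ≤ Real.sqrt q := this
  calc γ ≤ α + Real.sqrt α * Real.sqrt β + Real.sqrt β * Real.sqrt γ := hcross
    _ ≤ Real.sqrt q + Real.sqrt (1 - Dz) + Real.sqrt (1 - Dz) := by linarith
    _ = 2 * Real.sqrt (1 - Dz) + Real.sqrt q := by ring

/-- uncertainty relation for computational- and Hadamard-basis measurement
distributions of a density operator `ρ` on `n` qubits:
`D_x(T) ≤ 2√(1 − D_z(S)) + √(|S|·|T|/2ⁿ)`. -/
theorem stmt9 {n : ℕ} (ρ : Matrix (Fin n → ZMod 2) (Fin n → ZMod 2) ℂ)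
    (hρ : ρ.PosSemidef) (htr : ρ.trace = 1)
    (S T : Finset (Fin n → ZMod 2)) :
    ∑ x ∈ T, ((hadamardN n * ρ * hadamardN n) x x).re
      ≤ 2 * Real.sqrt (1 - ∑ y ∈ S, (ρ y y).re)
        + Real.sqrt ((S.card : ℝ) * T.card / 2 ^ n) := by
  classical
  obtain ⟨C, hC⟩ : ∃ C : Matrix (Fin n → ZMod 2) (Fin n → ZMod 2) ℂ, ρ = C.conjTranspose * C := by
    open MatrixOrder in
    obtain ⟨X, hX, -, hXX⟩ := CFC.exists_sqrt_of_isSelfAdjoint_of_quasispectrumRestricts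
      hρ.isHermitian (QuasispectrumRestricts.nnreal_of_nonneg hρ.nonneg)
    exact ⟨X, by rw [← hXX]; exact congrArg (· * X) (show X = X.conjTranspose from (hX : X.conjTranspose = X).symm)⟩
  have hentry : ∀ y z, ρ y z = ∑ k, (starRingEnd ℂ) (C k y) * C k z := by
    intro y z
    rw [hC, Matrix.mul_apply]
    exact Finset.sum_congr rfl fun k _ => by rw [Matrix.conjTranspose_apply, starRingEnd_apply]
  have hdiag_re : ∀ y, (ρ y y).re = ∑ k, Complex.normSq (C k y) := by
    intro y
    rw [hentry, Complex.re_sum]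
    exact Finset.sum_congr rfl fun k _ => conj_mul_self_re _
  -- trace condition
  have htr' : ∑ k, ∑ y, Complex.normSq (C k y) = 1 := by
    have h1 : (ρ.trace).re = 1 := by rw [htr]; rfl
    rw [Matrix.trace, Complex.re_sum] at h1
    rw [Finset.sum_comm, ← h1]
    exact Finset.sum_congr rfl fun y _ => (hdiag_re y).symm
  -- diagonal entries of the conjugated matrix
  have hdiagH : ∀ x, ((hadamardN n * ρ * hadamardN n) x x).re
      = ∑ k, Complex.normSq (∑ y, hadamardN n x y * C k y) := by
    intro x
    have step : (hadamardN n * ρ * hadamardN n) x x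
        = ∑ k, (starRingEnd ℂ) (∑ y, hadamardN n x y * C k y)
            * (∑ y, hadamardN n x y * C k y) := by
      calc (hadamardN n * ρ * hadamardN n) x x
          = ∑ j, (hadamardN n * ρ) x j * hadamardN n j x := Matrix.mul_apply
        _ = ∑ j, ∑ y, (hadamardN n x y * ρ y j) * hadamardN n x j := by
            refine Finset.sum_congr rfl fun j _ => ?_
            rw [Matrix.mul_apply, hsymm j x, Finset.sum_mul]
        _ = ∑ j, ∑ y, ∑ k, (hadamardN n x y * (starRingEnd ℂ) (C k y))
              * (hadamardN n x j * C k j) := by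
            refine Finset.sum_congr rfl fun j _ => Finset.sum_congr rfl fun y _ => ?_
            rw [hentry y j, Finset.mul_sum, Finset.sum_mul]
            exact Finset.sum_congr rfl fun k _ => by ring
        _ = ∑ k, ∑ y, ∑ j, (hadamardN n x y * (starRingEnd ℂ) (C k y))
              * (hadamardN n x j * C k j) := by
            rw [Finset.sum_comm]
            rw [Finset.sum_congr rfl fun y (_ : y ∈ Finset.univ) => Finset.sum_comm]
            rw [Finset.sum_comm]
        _ = ∑ k, (∑ y, hadamardN n x y * (starRingEnd ℂ) (C k y))
              * (∑ j, hadamardN n x j * C k j) := by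
            exact Finset.sum_congr rfl fun k _ => (Finset.sum_mul_sum _ _ _ _).symm
        _ = ∑ k, (starRingEnd ℂ) (∑ y, hadamardN n x y * C k y)
              * (∑ y, hadamardN n x y * C k y) := by
            refine Finset.sum_congr rfl fun k _ => ?_
            congr 1
            rw [map_sum]
            exact (Finset.sum_congr rfl fun y _ => by rw [map_mul, hconj]).symm
    rw [step, Complex.re_sum]
    exact Finset.sum_congr rfl fun k _ => conj_mul_self_re _
  have hLHS : ∑ x ∈ T, ((hadamardN n * ρ * hadamardN n) x x).re
      = ∑ k, ∑ x ∈ T, Complex.normSq (∑ y, hadamardN n x y * C k y) := by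
    rw [Finset.sum_congr rfl fun x _ => hdiagH x, Finset.sum_comm]
  have hDz : ∑ y ∈ S, (ρ y y).re = ∑ k, ∑ y ∈ S, Complex.normSq (C k y) := by
    rw [Finset.sum_congr rfl fun y _ => hdiag_re y, Finset.sum_comm]
  rw [hLHS, hDz]
  exact main_aux S T (fun k y => C k y) htr'
end
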